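/- arXiv:1312.0993 — 2 statements merged into one kernel-verified Lean document; each statement's English description precedes it below -/
import Mathlib

section
/- For all real x, cos(x)·J₀(x) = Σ_{k=0}^∞ (-1)^k (4k)!/((2k)!)³ · (x/2)^{2k}, where J₀ is the Bessel function of the first kind of order 0. -/
open Polynomial Finset

private lemma besselJ0_aux_L1 (k : ℕ) :
    ((4*k).choose (2*k) : ℝ) =
      ∑ j ∈ Finset.range (2*k+1),
        (2:ℝ)^(j - (2*k - j)) * (j.choose (2*k - j)) * ((2*k).choose j) := by
  have h1 : ((X + 1 : ℝ[X]) ^ (4*k)).coeff (2*k) = ((4*k).choose (2*k) : ℝ) :=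
    coeff_X_add_one_pow ℝ _ _
  have h2 : (X + 1 : ℝ[X])^(4*k) = ((X^2 + 2*X) + 1)^(2*k) := by
    rw [show 4*k = 2*(2*k) by ring, pow_mul]; ring_nf
  rw [h2, add_pow] at h1
  rw [← h1, finset_sum_coeff]
  refine Finset.sum_congr rfl fun j hj => ?_
  have hj' : j ≤ 2*k := Nat.lt_succ_iff.mp (Finset.mem_range.mp hj)
  have hC : (C 2 : ℝ[X]) = 2 := map_ofNat C 2
  have e1 : (X^2 + 2*X : ℝ[X])^j = X^j * (X + C 2)^j := by
    rw [← mul_pow]; congr 1; rw [hC]; ring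
  rw [one_pow, mul_one, e1, ← C_eq_natCast, mul_assoc, ← mul_assoc, coeff_mul_C,
    show 2*k = (2*k - j) + j by omega, coeff_X_pow_mul, coeff_X_add_C_pow]
  rw [show 2*k - j + j - j = 2*k - j from by omega]

private lemma besselJ0_aux_Lmid (k : ℕ) :
    ((4*k).choose (2*k) : ℝ) =
      ∑ m ∈ Finset.range (k+1),
        (4:ℝ)^m * ((k+m).choose (k-m)) * ((2*k).choose (k+m)) := by
  rw [besselJ0_aux_L1 k, show (2*k+1) = k + (k+1) by omega, Finset.sum_range_add]
  have hz : ∀ i ∈ Finset.range k,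
      (2:ℝ)^(i - (2*k - i)) * (i.choose (2*k - i)) * ((2*k).choose i) = 0 := by
    intro i hi
    have : i < k := Finset.mem_range.mp hi
    rw [Nat.choose_eq_zero_of_lt (by omega)]
    simp
  rw [Finset.sum_congr rfl hz, Finset.sum_const, smul_zero, zero_add]
  refine Finset.sum_congr rfl fun m hm => ?_
  have hm' : m ≤ k := Nat.lt_succ_iff.mp (Finset.mem_range.mp hm)
  rw [show 2*k - (k+m) = k - m from by omega, show (k+m) - (k-m) = 2*m from by omega,
    pow_mul]
  norm_num

private lemma besselJ0_aux_L2 (k : ℕ) :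
    ∑ m ∈ Finset.range (k+1),
        (4:ℝ)^m / ((2*m).factorial * ((k-m).factorial:ℝ)^2)
      = (4*k).factorial / ((2*k).factorial:ℝ)^3 := by
  have hC : ((4*k).choose (2*k) : ℝ) = (4*k).factorial / ((2*k).factorial:ℝ)^2 := by
    have h := Nat.choose_mul_factorial_mul_factorial (show 2*k ≤ 4*k by omega)
    rw [show 4*k - 2*k = 2*k from by omega] at h
    have h' : (((4*k).choose (2*k) * (2*k).factorial * (2*k).factorial : ℕ) : ℝ)
        = ((4*k).factorial : ℝ) := by exact_mod_cast h
    push_cast at h'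
    field_simp
    linarith [h']
  have key : ∀ m ∈ Finset.range (k+1),
      (4:ℝ)^m * ((k+m).choose (k-m)) * ((2*k).choose (k+m))
        = (2*k).factorial * ((4:ℝ)^m / ((2*m).factorial * ((k-m).factorial:ℝ)^2)) := by
    intro m hm
    have hm' : m ≤ k := Nat.lt_succ_iff.mp (Finset.mem_range.mp hm)
    have h1 := Nat.choose_mul_factorial_mul_factorial (show k-m ≤ k+m by omega)
    rw [show (k+m) - (k-m) = 2*m from by omega] at h1
    have h2 := Nat.choose_mul_factorial_mul_factorial (show k+m ≤ 2*k by omega)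
    rw [show 2*k - (k+m) = k - m from by omega] at h2
    have h1' : (((k+m).choose (k-m) : ℝ)) * (k-m).factorial * (2*m).factorial
        = (k+m).factorial := by exact_mod_cast h1
    have h2' : (((2*k).choose (k+m) : ℝ)) * (k+m).factorial * (k-m).factorial
        = (2*k).factorial := by exact_mod_cast h2
    have f1 : ((2*m).factorial : ℝ) ≠ 0 := Nat.cast_ne_zero.mpr (Nat.factorial_ne_zero _)
    have f2 : ((k-m).factorial : ℝ) ≠ 0 := Nat.cast_ne_zero.mpr (Nat.factorial_ne_zero _)
    have f3 : ((k+m).factorial : ℝ) ≠ 0 := Nat.cast_ne_zero.mpr (Nat.factorial_ne_zero _)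
    field_simp
    linear_combination (((2*k).choose (k+m) : ℝ) * ((k-m).factorial : ℝ)) * h1'
      + h2'
  have := (besselJ0_aux_Lmid k).trans (Finset.sum_congr rfl key)
  rw [← Finset.mul_sum] at this
  have f4 : ((2*k).factorial : ℝ) ≠ 0 := Nat.cast_ne_zero.mpr (Nat.factorial_ne_zero _)
  rw [hC] at this
  field_simp at this ⊢
  linarith [this]

lemma sumcos (x : ℝ) : Summable fun n : ℕ => ‖(-1:ℝ) ^ n * x ^ (2*n) / ((2*n).factorial : ℝ)‖ := by
  refine (Real.summable_pow_div_factorial (x^2)).of_nonneg_of_le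
    (fun n => norm_nonneg _) (fun n => ?_)
  rw [norm_div, norm_mul, norm_pow, norm_pow, norm_neg, norm_one, one_pow, one_mul,
    Real.norm_natCast, show ‖x‖^(2*n) = (x^2)^n by rw [pow_mul, Real.norm_eq_abs, sq_abs]]
  gcongr
  omega

lemma sumJ0 (x : ℝ) : Summable fun n : ℕ => ‖(-1:ℝ) ^ n * (x/2) ^ (2*n) / ((n.factorial : ℝ))^2‖ := by
  refine (Real.summable_pow_div_factorial ((x/2)^2)).of_nonneg_of_le
    (fun n => norm_nonneg _) (fun n => ?_)
  rw [norm_div, norm_mul, norm_pow, norm_pow, norm_neg, norm_one, one_pow, one_mul,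
    norm_pow, Real.norm_natCast,
    show ‖x/2‖^(2*n) = ((x/2)^2)^n by rw [pow_mul, Real.norm_eq_abs, sq_abs]]
  gcongr
  calc (n.factorial : ℝ) = n.factorial * 1 := by ring
    _ ≤ (n.factorial : ℝ) * n.factorial := by
        have h : (1:ℝ) ≤ n.factorial := by exact_mod_cast Nat.factorial_pos n
        nlinarith [h]
    _ = (n.factorial : ℝ)^2 := by ring

/-- Bessel function of the first kind of order 0, via its Taylor series. -/
noncomputable def besselJ0 (x : ℝ) : ℝ :=
  ∑' n : ℕ, (-1) ^ n * (x / 2) ^ (2 * n) / (Nat.factorial n : ℝ) ^ 2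

theorem cos_mul_besselJ0_series (x : ℝ) :
    Real.cos x * besselJ0 x =
      ∑' k : ℕ, (-1) ^ k * (Nat.factorial (4 * k) : ℝ) / (Nat.factorial (2 * k) : ℝ) ^ 3
        * (x / 2) ^ (2 * k) := by
  rw [Real.cos_eq_tsum, besselJ0,
    tsum_mul_tsum_eq_tsum_sum_range_of_summable_norm (sumcos x) (sumJ0 x)]
  refine tsum_congr fun k => ?_
  have step : ∀ m ∈ Finset.range (k+1),
      ((-1:ℝ) ^ m * x ^ (2*m) / ((2*m).factorial : ℝ)) *
        ((-1:ℝ) ^ (k-m) * (x/2) ^ (2*(k-m)) / (((k-m).factorial : ℝ))^2)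
      = ((-1:ℝ)^k * (x/2)^(2*k)) * ((4:ℝ)^m / ((2*m).factorial * ((k-m).factorial:ℝ)^2)) := by
    intro m hm
    have hm' : m ≤ k := Nat.lt_succ_iff.mp (Finset.mem_range.mp hm)
    have h1 : (-1:ℝ)^m * (-1:ℝ)^(k-m) = (-1:ℝ)^k := by
      rw [← pow_add]; congr 1; omega
    have h2 : x^(2*m) = 4^m * (x/2)^(2*m) := by
      rw [show (4:ℝ)^m = 2^(2*m) by rw [pow_mul]; norm_num, ← mul_pow,
        show (2:ℝ)*(x/2) = x by ring]
    have h3 : (x/2)^(2*m) * (x/2)^(2*(k-m)) = (x/2)^(2*k) := by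
      rw [← pow_add]; congr 1; omega
    rw [div_mul_div_comm]
    have hnum : (-1:ℝ)^m * x^(2*m) * ((-1:ℝ)^(k-m) * (x/2)^(2*(k-m)))
        = (-1:ℝ)^k * (x/2)^(2*k) * 4^m := by
      calc (-1:ℝ)^m * x^(2*m) * ((-1:ℝ)^(k-m) * (x/2)^(2*(k-m)))
          = ((-1:ℝ)^m*(-1)^(k-m)) * (4^m * ((x/2)^(2*m)*(x/2)^(2*(k-m)))) := by rw [h2]; ring
        _ = (-1:ℝ)^k * (x/2)^(2*k) * 4^m := by rw [h1, h3]; ring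
    rw [hnum]
    ring
  rw [Finset.sum_congr rfl step, ← Finset.mul_sum, besselJ0_aux_L2]
  ring
end

section
/- For all real x, cos(x)·J₀(x) = Σ_{n=0}^∞ ((1/4)_n (3/4)_n) / ((1/2)_n (1/2)_n) · (-x²)^n / (n!)², where (a)_n denotes the Pochhammer symbol. -/
/-- Pochhammer (rising factorial) symbol for real argument. -/
noncomputable def poch (a : ℝ) (n : ℕ) : ℝ := ∏ i ∈ Finset.range n, (a + i)

open Finset Polynomial

lemma coeff_Xsq_add_one_pow (N d : ℕ) :
    ((X ^ 2 + 1 : Polynomial ℕ) ^ N).coeff d =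
      if d % 2 = 0 then N.choose (d / 2) else 0 := by
  rw [add_pow, finset_sum_coeff]
  simp only [one_pow, mul_one, ← pow_mul, ← C_eq_natCast, coeff_mul_C, coeff_X_pow]
  rcases Nat.even_or_odd d with ⟨m, rfl⟩ | ⟨m, rfl⟩
  · have hd : (m + m) % 2 = 0 := by omega
    rw [if_pos hd]
    have hdm : (m + m) / 2 = m := by omega
    rw [hdm]
    rw [Finset.sum_eq_single m]
    · rw [if_pos (by omega), one_mul]; simp
    · intro b _ hb
      rw [if_neg (by omega), zero_mul]
    · intro hm
      rw [if_pos (by omega), one_mul, Nat.choose_eq_zero_of_lt (by simp at hm; omega)]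
      simp
  · rw [if_neg (by omega)]
    apply Finset.sum_eq_zero
    intro b _
    rw [if_neg (by omega), zero_mul]

lemma key_binom (n : ℕ) :
    ∑ k ∈ Finset.range (n + 1),
      (2*n).choose (2*k) * ((2*(n-k)).choose (n-k)) * 4 ^ k = (4*n).choose (2*n) := by
  classical
  set g : ℕ → ℕ := fun i =>
    (if i % 2 = 0 then i.choose (i/2) else 0) * 2^(2*n-i) * (2*n).choose i with hg
  have e : ((X + 1 : Polynomial ℕ)) ^ (4*n) = ((X^2 + 1) + 2*X) ^ (2*n) := by
    rw [show 4*n = 2*(2*n) by ring, pow_mul]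
    congr 1
    ring
  have h1 : ((X+1:Polynomial ℕ)^(4*n)).coeff (2*n) = (4*n).choose (2*n) := by
    simp [coeff_X_add_one_pow]
  have h2 : ((X+1:Polynomial ℕ)^(4*n)).coeff (2*n) = ∑ i ∈ range (2*n+1), g i := by
    rw [e, add_pow, finset_sum_coeff]
    apply Finset.sum_congr rfl
    intro i hi
    have hi' : i ≤ 2*n := by simp at hi; omega
    have hrw : (X^2+1:Polynomial ℕ)^i * (2*X)^(2*n-i) * ((2*n).choose i : Polynomial ℕ)
        = ((2^(2*n-i) * (2*n).choose i : ℕ) : Polynomial ℕ) * ((X^2+1)^i * X^(2*n-i)) := by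
      push_cast
      ring
    rw [hrw, ← C_eq_natCast, coeff_C_mul, coeff_mul_X_pow', if_pos (by omega : 2*n - i ≤ 2*n),
      show 2*n - (2*n - i) = i by omega, coeff_Xsq_add_one_pow]
    simp only [Nat.cast_id]
    ring
  have hsub : (Finset.range (n+1)).image (fun k => 2*k) ⊆ Finset.range (2*n+1) := by
    intro x hx
    simp only [Finset.mem_image, Finset.mem_range] at hx ⊢
    obtain ⟨k, hk, rfl⟩ := hx
    omega
  have h3 : ∑ i ∈ range (2*n+1), g i = ∑ k ∈ range (n+1), g (2*k) := by
    have himg : ∑ k ∈ Finset.range (n+1), g (2*k)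
        = ∑ i ∈ (Finset.range (n+1)).image (fun k => 2*k), g i :=
      (Finset.sum_image (fun a _ b _ h => by omega)).symm
    rw [himg]
    apply (Finset.sum_subset hsub ?_).symm
    intro x hx hnx
    simp only [Finset.mem_image, Finset.mem_range] at hx hnx
    have hodd : x % 2 = 1 := by
      by_contra h
      exact hnx ⟨x/2, by omega, by omega⟩
    simp [hg, hodd]
  have h4 : ∀ k ≤ n, g (2*k) = (2*k).choose k * 4^(n-k) * (2*n).choose (2*k) := by
    intro k hk
    simp only [hg]
    rw [if_pos (by omega), Nat.mul_div_cancel_left _ (by norm_num : 0 < 2),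
      show 2*n - 2*k = 2*(n-k) by omega, pow_mul]
    norm_num
  have h5 : ∑ k ∈ range (n+1), g (2*k)
      = ∑ k ∈ range (n+1), (2*n).choose (2*k) * ((2*(n-k)).choose (n-k)) * 4 ^ k := by
    rw [← Finset.sum_range_reflect (fun k => g (2*k)) (n+1)]
    apply Finset.sum_congr rfl
    intro j hj
    have hj' : j ≤ n := by simp at hj; omega
    rw [h4 (n+1-1-j) (by omega)]
    rw [show n+1-1-j = n - j by omega]
    rw [show n - (n - j) = j by omega]
    rw [show 2*(n-j) = 2*n - 2*j by omega, Nat.choose_symm (by omega)]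
    rw [show 2*n - 2*j = 2*(n-j) by omega]
    ring
  rw [← h5, ← h3, ← h2, h1]


lemma poch_succ (a : ℝ) (n : ℕ) : poch a (n+1) = poch a n * (a + n) :=
  Finset.prod_range_succ _ _

lemma poch_pos {a : ℝ} (ha : 0 < a) (n : ℕ) : 0 < poch a n :=
  Finset.prod_pos (fun i _ => by positivity)

lemma poch_half (n : ℕ) :
    poch (1/2) n * (4^n * (n.factorial : ℝ)) = ((2*n).factorial : ℝ) := by
  induction n with
  | zero => simp [poch]
  | succ n ih =>
    rw [poch_succ]
    have h2 : ((2*(n+1)).factorial : ℝ) = (2*n+2) * ((2*n+1) * ((2*n).factorial : ℝ)) := by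
      rw [show 2*(n+1) = (2*n+1)+1 by ring, Nat.factorial_succ, Nat.factorial_succ]
      push_cast; ring
    have h3 : ((n+1).factorial : ℝ) = (n+1) * (n.factorial : ℝ) := by
      rw [Nat.factorial_succ]; push_cast; ring
    rw [h2, h3]
    linear_combination (2*(n:ℝ)+2)*(2*(n:ℝ)+1)*ih

lemma poch_quarter (n : ℕ) :
    poch (1/4) n * poch (1/2) n * poch (3/4) n * (n.factorial : ℝ) * 256^n
      = ((4*n).factorial : ℝ) := by
  induction n with
  | zero => simp [poch]
  | succ n ih =>
    rw [poch_succ, poch_succ, poch_succ]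
    have h4 : ((4*(n+1)).factorial : ℝ)
        = (4*n+4)*((4*n+3)*((4*n+2)*((4*n+1)*((4*n).factorial : ℝ)))) := by
      rw [show 4*(n+1) = (((4*n+1)+1)+1)+1 by ring, Nat.factorial_succ, Nat.factorial_succ,
        Nat.factorial_succ, Nat.factorial_succ]
      push_cast; ring
    have h3 : ((n+1).factorial : ℝ) = (n+1) * (n.factorial : ℝ) := by
      rw [Nat.factorial_succ]; push_cast; ring
    rw [h4, h3]
    linear_combination (4*(n:ℝ)+1)*(4*(n:ℝ)+2)*(4*(n:ℝ)+3)*(4*(n:ℝ)+4)*ih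

lemma hK (n : ℕ) :
    (((4*n).choose (2*n)) : ℝ) * (poch (1/2) n * poch (1/2) n * (n.factorial : ℝ)^2)
      = poch (1/4) n * poch (3/4) n * (4^n * ((2*n).factorial : ℝ)) := by
  have hA4 : ((4:ℝ)^n) ≠ 0 := by positivity
  have hP1 := poch_half n
  have hP2 := poch_quarter n
  have hC : (((4*n).choose (2*n)) : ℝ) * ((2*n).factorial : ℝ) * ((2*n).factorial : ℝ)
      = ((4*n).factorial : ℝ) := by
    have := Nat.choose_mul_factorial_mul_factorial (show 2*n ≤ 4*n by omega)
    rw [show 4*n - 2*n = 2*n by omega] at this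
    exact_mod_cast this
  have h256 : ((256:ℝ)^n) = ((4:ℝ)^n)^4 := by
    rw [show (256:ℝ) = 4^4 by norm_num, ← pow_mul, mul_comm 4 n, pow_mul]
  apply mul_left_cancel₀ (pow_ne_zero 2 hA4)
  linear_combination
    ((((4*n).choose (2*n)) : ℝ) * (poch (1/2) n * 4^n * (n.factorial : ℝ) + ((2*n).factorial : ℝ))
      + poch (1/4) n * poch (3/4) n * ((4:ℝ)^n)^3) * hP1
    + hC - hP2 + poch (1/4) n * poch (3/4) n * poch (1/2) n * (n.factorial : ℝ) * h256


lemma summable_cos_norm (x : ℝ) :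
    Summable (fun k : ℕ => ‖(-1:ℝ)^k * x^(2*k) / ((2*k).factorial : ℝ)‖) := by
  have h := (Real.summable_pow_div_factorial |x|).comp_injective
    (fun a b hab => by dsimp at hab; omega : Function.Injective (fun k : ℕ => 2*k))
  refine h.congr fun k => ?_
  simp only [Function.comp_apply, norm_div, norm_mul, norm_pow, norm_neg, norm_one, one_pow,
    one_mul, Real.norm_eq_abs, abs_pow, abs_abs, Nat.abs_cast]

lemma summable_J0_norm (x : ℝ) :
    Summable (fun k : ℕ => ‖(-1:ℝ)^k * (x/2)^(2*k) / ((k.factorial : ℝ))^2‖) := by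
  refine Summable.of_nonneg_of_le (fun k => norm_nonneg _) (fun k => ?_)
    (Real.summable_pow_div_factorial ((x/2)^2))
  have h1 : (1:ℝ) ≤ (k.factorial : ℝ) := by exact_mod_cast Nat.one_le_iff_ne_zero.mpr k.factorial_ne_zero
  have h2 : (0:ℝ) < (k.factorial : ℝ) := by positivity
  calc ‖(-1:ℝ)^k * (x/2)^(2*k) / ((k.factorial : ℝ))^2‖
      = ((x/2)^2)^k / ((k.factorial : ℝ))^2 := by
        rw [pow_mul]
        simp only [norm_div, norm_mul, norm_pow, norm_neg, norm_one, one_pow, one_mul,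
          Real.norm_eq_abs, abs_pow, sq_abs, Nat.abs_cast]
        rw [show ((|x|/|2|:ℝ))^2 = (x/2)^2 by rw [div_pow, div_pow, sq_abs, sq_abs]]
    _ ≤ ((x/2)^2)^k / (k.factorial : ℝ) := by
        apply div_le_div_of_nonneg_left (by positivity) h2
        nlinarith

lemma term_eq (x : ℝ) (n k : ℕ) (hk : k ≤ n) :
    ((-1:ℝ)^k * x^(2*k) / ((2*k).factorial : ℝ))
      * ((-1:ℝ)^(n-k) * (x/2)^(2*(n-k)) / (((n-k).factorial : ℝ))^2)
    = (((2*n).choose (2*k) * ((2*(n-k)).choose (n-k)) * 4^k : ℕ) : ℝ)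
      * ((-1:ℝ)^n * x^(2*n) / (4^n * ((2*n).factorial : ℝ))) := by
  have e1 : ((2*n).factorial : ℝ)
      = ((2*n).choose (2*k) : ℝ) * ((2*k).factorial : ℝ) * ((2*(n-k)).factorial : ℝ) := by
    have h := Nat.choose_mul_factorial_mul_factorial (show 2*k ≤ 2*n by omega)
    rw [show 2*n - 2*k = 2*(n-k) by omega] at h
    exact_mod_cast h.symm
  have e2 : ((2*(n-k)).factorial : ℝ)
      = ((2*(n-k)).choose (n-k) : ℝ) * ((n-k).factorial : ℝ) * ((n-k).factorial : ℝ) := by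
    have h := Nat.choose_mul_factorial_mul_factorial (show n-k ≤ 2*(n-k) by omega)
    rw [show 2*(n-k) - (n-k) = n-k by omega] at h
    exact_mod_cast h.symm
  have s1 : (-1:ℝ)^k * (-1:ℝ)^(n-k) = (-1:ℝ)^n := by rw [← pow_add]; congr 1; omega
  have s2 : (x:ℝ)^(2*k) * x^(2*(n-k)) = x^(2*n) := by rw [← pow_add]; congr 1; omega
  have s3 : ((x/2)^(2*(n-k)) : ℝ) = x^(2*(n-k)) / 4^(n-k) := by
    rw [div_pow, show (2:ℝ)^(2*(n-k)) = 4^(n-k) by rw [pow_mul]; norm_num]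
  have s4 : (4:ℝ)^k * 4^(n-k) = 4^n := by rw [← pow_add]; congr 1; omega
  have hA : ((2*k).factorial : ℝ) ≠ 0 := by positivity
  have hB : (((n-k).factorial : ℝ)) ≠ 0 := by positivity
  have hT2 : ((2*n).factorial : ℝ) ≠ 0 := by positivity
  have h4nk : ((4:ℝ)^(n-k)) ≠ 0 := by positivity
  have h4n : ((4:ℝ)^n) ≠ 0 := by positivity
  have hcoef : (1:ℝ) / (((2*k).factorial : ℝ) * (4^(n-k) * (((n-k).factorial : ℝ))^2))
      = (((2*n).choose (2*k) : ℝ) * ((2*(n-k)).choose (n-k) : ℝ) * 4^k)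
        / (4^n * ((2*n).factorial : ℝ)) := by
    rw [div_eq_div_iff (by positivity) (by positivity)]
    linear_combination (4:ℝ)^n * e1
      + (4:ℝ)^n * ((2*n).choose (2*k) : ℝ) * ((2*k).factorial : ℝ) * e2
      - ((2*n).choose (2*k) : ℝ) * ((2*(n-k)).choose (n-k) : ℝ) * ((2*k).factorial : ℝ)
        * (((n-k).factorial : ℝ))^2 * s4
  calc ((-1:ℝ)^k * x^(2*k) / ((2*k).factorial : ℝ))
      * ((-1:ℝ)^(n-k) * (x/2)^(2*(n-k)) / (((n-k).factorial : ℝ))^2)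
      = ((-1:ℝ)^k * (-1:ℝ)^(n-k)) * (x^(2*k) * x^(2*(n-k)))
        * ((1:ℝ) / (((2*k).factorial : ℝ) * (4^(n-k) * (((n-k).factorial : ℝ))^2))) := by
        rw [s3]; ring
    _ = (-1:ℝ)^n * x^(2*n)
        * ((((2*n).choose (2*k) : ℝ) * ((2*(n-k)).choose (n-k) : ℝ) * 4^k)
          / (4^n * ((2*n).factorial : ℝ))) := by rw [s1, s2, hcoef]
    _ = (((2*n).choose (2*k) * ((2*(n-k)).choose (n-k)) * 4^k : ℕ) : ℝ)
        * ((-1:ℝ)^n * x^(2*n) / (4^n * ((2*n).factorial : ℝ))) := by push_cast; ring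

theorem cos_mul_besselJ0_hypergeom (x : ℝ) :
    Real.cos x * besselJ0 x =
      ∑' n : ℕ, (poch (1/4) n * poch (3/4) n) / (poch (1/2) n * poch (1/2) n)
        * (-(x ^ 2)) ^ n / (Nat.factorial n : ℝ) ^ 2 := by
  rw [Real.cos_eq_tsum, besselJ0,
    tsum_mul_tsum_eq_tsum_sum_range_of_summable_norm (summable_cos_norm x) (summable_J0_norm x)]
  refine tsum_congr fun n => ?_
  have hsum : ∑ k ∈ Finset.range (n+1),
      ((-1:ℝ)^k * x^(2*k) / ((2*k).factorial : ℝ))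
        * ((-1:ℝ)^(n-k) * (x/2)^(2*(n-k)) / (((n-k).factorial : ℝ))^2)
      = (((4*n).choose (2*n) : ℕ) : ℝ)
        * ((-1:ℝ)^n * x^(2*n) / (4^n * ((2*n).factorial : ℝ))) := by
    rw [Finset.sum_congr rfl (fun k hk => term_eq x n k (by simp at hk; omega)),
      ← Finset.sum_mul, ← Nat.cast_sum, key_binom]
  rw [hsum]
  have hp : poch (1/2) n ≠ 0 := ne_of_gt (poch_pos (by norm_num) n)
  have hF : (n.factorial : ℝ) ≠ 0 := by positivity
  have hT2 : ((2*n).factorial : ℝ) ≠ 0 := by positivity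
  have h4n : ((4:ℝ)^n) ≠ 0 := by positivity
  have hx : (-(x^2) : ℝ)^n = (-1:ℝ)^n * x^(2*n) := by
    rw [neg_pow, ← pow_mul]
  rw [hx]
  have hKn := hK n
  field_simp
  linear_combination (x^(2*n)) * hKn
end
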